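/- The powers A^n of the cube stealing matrix converge, as n → ∞, to the 6×6 matrix with all entries equal to 1/6. -/
import Mathlib


open Matrix

/-- The 6×6 cube stealing matrix: faces 0..5 with opposite pairs (0,5),(1,3),(2,4);
entry is 1/4 for adjacent faces, 0 for equal or opposite faces. -/
noncomputable def cubeA : Matrix (Fin 6) (Fin 6) ℝ :=
  !![0, 1/4, 1/4, 1/4, 1/4, 0;
     1/4, 0, 1/4, 0, 1/4, 1/4;
     1/4, 1/4, 0, 1/4, 0, 1/4;
     1/4, 0, 1/4, 0, 1/4, 1/4;
     1/4, 1/4, 0, 1/4, 0, 1/4;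
     0, 1/4, 1/4, 1/4, 1/4, 0]

@[simp]
lemma my_cons_val_five {α : Type*} (x : α) (u : Fin 5 → α) :
    Matrix.vecCons x u 5 = u 4 := rfl

/-- The limit matrix: all entries 1/6. -/
noncomputable def cubeL : Matrix (Fin 6) (Fin 6) ℝ := Matrix.of fun _ _ => (1/6 : ℝ)

set_option maxHeartbeats 2000000 in
lemma cubeA_mul_L : cubeA * cubeL = cubeL := by
  ext i j
  fin_cases i <;> fin_cases j <;>
    (simp [cubeA, cubeL, Matrix.mul_apply, Fin.sum_univ_six];
      try norm_num [Matrix.vecHead, Matrix.vecTail])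

set_option maxHeartbeats 2000000 in
lemma cubeA_sq : cubeA * cubeA = (3/2 : ℝ) • cubeL - (1/2 : ℝ) • cubeA := by
  ext i j
  fin_cases i <;> fin_cases j <;>
    (simp [cubeA, cubeL, Matrix.mul_apply, Fin.sum_univ_six];
      try norm_num [Matrix.vecHead, Matrix.vecTail])

lemma cubeA_pow_succ (n : ℕ) :
    cubeA ^ (n + 1) = cubeL + ((-1/2 : ℝ)) ^ n • (cubeA - cubeL) := by
  induction n with
  | zero => simp
  | succ n ih =>
    have h1 : cubeA ^ (n + 1 + 1) = cubeA * cubeA ^ (n + 1) := pow_succ' cubeA (n + 1)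
    have h2 : cubeA * cubeA - cubeL = (-1/2 : ℝ) • (cubeA - cubeL) := by
      rw [cubeA_sq]; ext i j; simp [cubeL]; ring
    rw [h1, ih, Matrix.mul_add, cubeA_mul_L, Matrix.mul_smul,
      Matrix.mul_sub, cubeA_mul_L, h2, smul_smul, ← pow_succ]

/-- The powers A^n converge to the matrix with all entries 1/6. -/
theorem stmt_8 :
    Filter.Tendsto (fun n : ℕ => cubeA ^ n) Filter.atTop
      (nhds (Matrix.of fun _ _ => (1/6 : ℝ))) := by
  rw [← Filter.tendsto_add_atTop_iff_nat 1]
  have hL : (Matrix.of fun _ _ => (1/6 : ℝ)) = cubeL := rfl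
  rw [hL]
  simp only [cubeA_pow_succ]
  have h0 : Filter.Tendsto (fun n : ℕ => ((-1/2 : ℝ)) ^ n) Filter.atTop (nhds 0) := by
    apply tendsto_pow_atTop_nhds_zero_of_abs_lt_one
    rw [abs_lt]; constructor <;> norm_num
  have := (h0.smul_const (cubeA - cubeL)).const_add cubeL
  simpa using this
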